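/- For every integer d ≥ 1 and every deterministic two-bit-feedback algorithm Alg for contextual bilateral trade in dimension d that posts p_t ≤ q_t at every round (per-round budget balance), there exists an instance with horizon T = d, contexts x_t = e_t (the t-th standard basis vector of ℝ^d), and vectors s, b ∈ ℝ^d whose coordinates satisfy (s_j, b_j) ∈ {(0, 1/3), (2/3, 1)} for every j, such that the gain-from-trade regret of Alg on this instance is at least d/6. -/

import Mathlib

open MeasureTheory Finset
open scoped RealInnerProductSpace

noncomputable section

/-- A deterministic two-bit-feedback algorithm: from the history (context, seller price,
buyer price, seller bit, buyer bit) and the current context, produce a pair of prices. -/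
abbrev Algo2 (d : ℕ) :=
  List (EuclideanSpace ℝ (Fin d) × ℝ × ℝ × Bool × Bool) → EuclideanSpace ℝ (Fin d) → ℝ × ℝ

/-- The history of the first `t` rounds under two-bit feedback. -/
def hist2 {d : ℕ} (Alg : Algo2 d) (s b : EuclideanSpace ℝ (Fin d))
    (x : ℕ → EuclideanSpace ℝ (Fin d)) :
    ℕ → List (EuclideanSpace ℝ (Fin d) × ℝ × ℝ × Bool × Bool)
  | 0 => []
  | t + 1 =>
    let h := hist2 Alg s b x t
    let pq := Alg h (x t)
    h ++ [(x t, pq.1, pq.2, decide (⟪s, x t⟫ ≤ pq.1), decide (pq.2 ≤ ⟪b, x t⟫))]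

/-- The pair of prices posted at round `t`. -/
def price2 {d : ℕ} (Alg : Algo2 d) (s b : EuclideanSpace ℝ (Fin d))
    (x : ℕ → EuclideanSpace ℝ (Fin d)) (t : ℕ) : ℝ × ℝ :=
  Alg (hist2 Alg s b x t) (x t)

/-- The gain from trade of the algorithm at round `t`. -/
def gft2 {d : ℕ} (Alg : Algo2 d) (s b : EuclideanSpace ℝ (Fin d))
    (x : ℕ → EuclideanSpace ℝ (Fin d)) (t : ℕ) : ℝ :=
  if ⟪s, x t⟫ ≤ (price2 Alg s b x t).1 ∧ (price2 Alg s b x t).2 ≤ ⟪b, x t⟫ then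
    ⟪b - s, x t⟫ else 0

/-- The profit of the algorithm at round `t`. -/
def profit2 {d : ℕ} (Alg : Algo2 d) (s b : EuclideanSpace ℝ (Fin d))
    (x : ℕ → EuclideanSpace ℝ (Fin d)) (t : ℕ) : ℝ :=
  if ⟪s, x t⟫ ≤ (price2 Alg s b x t).1 ∧ (price2 Alg s b x t).2 ≤ ⟪b, x t⟫ then
    (price2 Alg s b x t).2 - (price2 Alg s b x t).1 else 0

/-- The gain-from-trade regret over horizon `T`. -/
def gftRegret2 {d : ℕ} (Alg : Algo2 d) (s b : EuclideanSpace ℝ (Fin d))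
    (x : ℕ → EuclideanSpace ℝ (Fin d)) (T : ℕ) : ℝ :=
  ∑ t ∈ Finset.range T, max ⟪b - s, x t⟫ 0 - ∑ t ∈ Finset.range T, gft2 Alg s b x t

/-- The profit regret over horizon `T`. -/
def profitRegret2 {d : ℕ} (Alg : Algo2 d) (s b : EuclideanSpace ℝ (Fin d))
    (x : ℕ → EuclideanSpace ℝ (Fin d)) (T : ℕ) : ℝ :=
  ∑ t ∈ Finset.range T, max ⟪b - s, x t⟫ 0 - ∑ t ∈ Finset.range T, profit2 Alg s b x t

namespace TwoBitLB

def xctx (d : ℕ) : ℕ → EuclideanSpace ℝ (Fin d) :=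
  fun t => if h : t < d then EuclideanSpace.single (⟨t, h⟩ : Fin d) 1 else 0

def sOf (d : ℕ) (c : ℕ → Bool) : EuclideanSpace ℝ (Fin d) :=
  WithLp.toLp 2 (fun j : Fin d => if c j then 2/3 else 0)

def bOf (d : ℕ) (c : ℕ → Bool) : EuclideanSpace ℝ (Fin d) :=
  WithLp.toLp 2 (fun j : Fin d => if c j then 1 else 1/3)

lemma inner_xctx {d : ℕ} (v : EuclideanSpace ℝ (Fin d)) {t : ℕ} (ht : t < d) :
    ⟪v, xctx d t⟫ = v ⟨t, ht⟩ := by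
  simp only [xctx, ht, dif_pos]
  rw [EuclideanSpace.inner_single_right]
  simp

def clist (d : ℕ) (Alg : Algo2 d) : ℕ → List Bool
  | 0 => []
  | t + 1 =>
    let l := clist d Alg t
    let c := fun r => l.getD r false
    l ++ [decide ((Alg (hist2 Alg (sOf d c) (bOf d c) (xctx d) t) (xctx d t)).2 ≤ 1/3)]

def cfun (d : ℕ) (Alg : Algo2 d) (t : ℕ) : Bool := (clist d Alg (t+1)).getD t false

lemma clist_length (d : ℕ) (Alg : Algo2 d) (t : ℕ) : (clist d Alg t).length = t := by
  induction t with
  | zero => rfl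
  | succ t ih => simp [clist, ih]

lemma clist_getD (d : ℕ) (Alg : Algo2 d) {r t : ℕ} (h : r < t) :
    (clist d Alg t).getD r false = cfun d Alg r := by
  induction t with
  | zero => omega
  | succ t ih =>
    rcases Nat.lt_succ_iff_lt_or_eq.mp h with h' | rfl
    · rw [← ih h']
      show ((clist d Alg t) ++ _).getD r false = _
      rw [List.getD_append _ _ _ _ (by rw [clist_length]; exact h')]
    · rfl

lemma hist2_congr {d : ℕ} (Alg : Algo2 d) {c c' : ℕ → Bool} {t : ℕ} (htd : t ≤ d)
    (hag : ∀ r < t, c r = c' r) :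
    hist2 Alg (sOf d c) (bOf d c) (xctx d) t
      = hist2 Alg (sOf d c') (bOf d c') (xctx d) t := by
  induction t with
  | zero => rfl
  | succ t ih =>
    have ht : t < d := htd
    have hh := ih (le_of_lt ht) (fun r hr => hag r (Nat.lt_succ_of_lt hr))
    have hs : ⟪sOf d c, xctx d t⟫ = ⟪sOf d c', xctx d t⟫ := by
      rw [inner_xctx _ ht, inner_xctx _ ht]
      show (if c t then (2/3:ℝ) else 0) = (if c' t then (2/3:ℝ) else 0)
      rw [hag t (Nat.lt_succ_self t)]
    have hb : ⟪bOf d c, xctx d t⟫ = ⟪bOf d c', xctx d t⟫ := by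
      rw [inner_xctx _ ht, inner_xctx _ ht]
      show (if c t then (1:ℝ) else 1/3) = (if c' t then (1:ℝ) else 1/3)
      rw [hag t (Nat.lt_succ_self t)]
    show (hist2 Alg (sOf d c) (bOf d c) (xctx d) t) ++ _
        = (hist2 Alg (sOf d c') (bOf d c') (xctx d) t) ++ _
    rw [hh, hs, hb]

lemma cfun_spec {d : ℕ} (Alg : Algo2 d) {t : ℕ} (ht : t < d) :
    cfun d Alg t
      = decide ((price2 Alg (sOf d (cfun d Alg)) (bOf d (cfun d Alg)) (xctx d) t).2 ≤ 1/3) := by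
  have hget : cfun d Alg t
      = decide ((Alg (hist2 Alg (sOf d (fun r => (clist d Alg t).getD r false))
          (bOf d (fun r => (clist d Alg t).getD r false)) (xctx d) t) (xctx d t)).2 ≤ 1/3) := by
    show (clist d Alg (t+1)).getD t false = _
    show ((clist d Alg t) ++ [_]).getD t false = _
    rw [List.getD_append_right _ _ _ _ (by rw [clist_length])]
    simp [clist_length]
  rw [hget]
  congr 2
  exact congrArg (fun h => (Alg h (xctx d t)).2)
    (hist2_congr Alg (le_of_lt ht) (fun r hr => clist_getD d Alg hr))

theorem main (d : ℕ) (hd : 1 ≤ d) (Alg : Algo2 d)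
    (hbb : ∀ h x, (Alg h x).1 ≤ (Alg h x).2) :
    ∃ s b : EuclideanSpace ℝ (Fin d),
      (∀ j : Fin d, (s j = 0 ∧ b j = 1/3) ∨ (s j = 2/3 ∧ b j = 1)) ∧
      gftRegret2 Alg s b
        (fun t => if h : t < d then EuclideanSpace.single (⟨t, h⟩ : Fin d) 1 else 0) d
        ≥ (d : ℝ) / 6 := by
  set c := cfun d Alg with hc
  refine ⟨sOf d c, bOf d c, ?_, ?_⟩
  · intro j
    by_cases h : c j
    · right; constructor <;> simp [sOf, bOf, h]
    · left; constructor <;> simp [sOf, bOf, h]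
  · show gftRegret2 Alg (sOf d c) (bOf d c) (xctx d) d ≥ (d : ℝ) / 6
    have hgft : ∀ t < d, gft2 Alg (sOf d c) (bOf d c) (xctx d) t = 0 := by
      intro t ht
      rw [gft2, if_neg]
      rintro ⟨h1, h2⟩
      rw [inner_xctx _ ht] at h1 h2
      have hq := cfun_spec Alg ht
      by_cases hcase : c t
      · -- s t = 2/3, so 2/3 ≤ p ≤ q; but c t true means q ≤ 1/3
        have hqle : (price2 Alg (sOf d c) (bOf d c) (xctx d) t).2 ≤ 1/3 := by
          rw [hc] at hcase ⊢; rw [hq] at hcase; exact of_decide_eq_true hcase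
        have hs : (sOf d c) ⟨t, ht⟩ = 2/3 := by simp [sOf, hcase]
        have hpq := hbb (hist2 Alg (sOf d c) (bOf d c) (xctx d) t) (xctx d t)
        rw [hs] at h1
        have : (price2 Alg (sOf d c) (bOf d c) (xctx d) t).1
            ≤ (price2 Alg (sOf d c) (bOf d c) (xctx d) t).2 := hpq
        linarith
      · -- b t = 1/3, c t false means ¬(q ≤ 1/3), but trade needs q ≤ b t = 1/3
        have hqgt : ¬ (price2 Alg (sOf d c) (bOf d c) (xctx d) t).2 ≤ 1/3 := by
          rw [hc] at hcase ⊢; rw [hq] at hcase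
          simpa using hcase
        have hb : (bOf d c) ⟨t, ht⟩ = 1/3 := by simp [bOf, hcase]
        rw [hb] at h2
        exact hqgt h2
    have hmax : ∀ t < d, max ⟪bOf d c - sOf d c, xctx d t⟫ (0:ℝ) = 1/3 := by
      intro t ht
      rw [inner_xctx _ ht]
      have : (bOf d c - sOf d c) ⟨t, ht⟩ = 1/3 := by
        show (bOf d c) ⟨t, ht⟩ - (sOf d c) ⟨t, ht⟩ = 1/3
        by_cases h : c t <;> simp [sOf, bOf, h] <;> norm_num
      rw [this]; norm_num
    rw [gftRegret2, Finset.sum_congr rfl (fun t htm => hmax t (Finset.mem_range.mp htm)),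
      Finset.sum_congr rfl (fun t htm => hgft t (Finset.mem_range.mp htm))]
    simp only [Finset.sum_const, Finset.card_range, nsmul_eq_mul, Finset.sum_const_zero]
    have : (0:ℝ) ≤ d := Nat.cast_nonneg d
    rw [ge_iff_le]
    linarith

end TwoBitLB

/-- Proposition 4.3 (lower bound for efficiency maximization with two-bit feedback): any
per-round budget balanced deterministic algorithm suffers gain-from-trade regret at least
`d/6` on some instance with horizon `d`, contexts the standard basis vectors, and
coordinates of `(s, b)` in `{(0, 1/3), (2/3, 1)}`. -/
theorem two_bit_gft_lower_bound
    (d : ℕ) (hd : 1 ≤ d) (Alg : Algo2 d)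
    (hbb : ∀ h x, (Alg h x).1 ≤ (Alg h x).2) :
    ∃ s b : EuclideanSpace ℝ (Fin d),
      (∀ j : Fin d, (s j = 0 ∧ b j = 1/3) ∨ (s j = 2/3 ∧ b j = 1)) ∧
      gftRegret2 Alg s b
        (fun t => if h : t < d then EuclideanSpace.single (⟨t, h⟩ : Fin d) 1 else 0) d
        ≥ (d : ℝ) / 6 := by
  exact TwoBitLB.main d hd Alg hbb

end
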